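/- For any join semilattice J, there is an embedding of J into a complete Boolean algebra that preserves all existing finite joins and all existing exact meets. -/

import Mathlib

set_option linter.unusedSectionVars false

namespace Funayama

universe u
variable {J : Type u} [SemilatticeSup J] [DecidableEq J]

/-- An exact meet: `t` is the glb of `T`, and this glb is preserved by all joins. -/
def Exact (T : Set J) (t : J) : Prop :=
  IsGLB T t ∧ ∀ a : J, IsGLB ((fun s => a ⊔ s) '' T) (a ⊔ t)

lemma exact_singleton (x : J) : Exact {x} x := by
  refine ⟨isGLB_singleton, fun a => ?_⟩
  rw [Set.image_singleton]; exact isGLB_singleton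

lemma Exact.translate {T : Set J} {t : J} (h : Exact T t) (a : J) :
    Exact ((fun s => a ⊔ s) '' T) (a ⊔ t) := by
  refine ⟨h.2 a, fun b => ?_⟩
  have himg : (fun s => b ⊔ s) '' ((fun s => a ⊔ s) '' T) = (fun s => (b ⊔ a) ⊔ s) '' T := by
    rw [← Set.image_comp]
    exact Set.image_congr' (fun x => by simp [Function.comp, sup_assoc])
  rw [himg, ← sup_assoc]
  exact h.2 (b ⊔ a)

lemma Exact.glue {ι : Type u} {f : ι → J} {I : Set ι} {t : J}
    (hT : Exact (f '' I) t) (R : ι → Set J)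
    (hR : ∀ i ∈ I, Exact (R i) (f i)) : Exact (⋃ i ∈ I, R i) t := by
  constructor
  · constructor
    · rintro w hw
      simp only [Set.mem_iUnion] at hw
      obtain ⟨i, hi, hw⟩ := hw
      exact le_trans (hT.1.1 ⟨i, hi, rfl⟩) ((hR i hi).1.1 hw)
    · intro ℓ hℓ
      apply hT.1.2
      rintro w ⟨i, hi, rfl⟩
      apply (hR i hi).1.2
      intro w' hw'
      exact hℓ (Set.mem_biUnion hi hw')
  · intro a
    constructor
    · rintro w ⟨w', hw', rfl⟩
      simp only [Set.mem_iUnion] at hw'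
      obtain ⟨i, hi, hw'⟩ := hw'
      exact sup_le_sup_left (le_trans (hT.1.1 ⟨i, hi, rfl⟩) ((hR i hi).1.1 hw')) a
    · intro ℓ hℓ
      apply (hT.2 a).2
      rintro w ⟨w', ⟨i, hi, rfl⟩, rfl⟩
      apply ((hR i hi).2 a).2
      rintro w ⟨w', hw', rfl⟩
      exact hℓ ⟨w', Set.mem_biUnion hi hw', rfl⟩

lemma Exact.sup2 {T₁ T₂ : Set J} {t₁ t₂ : J} (h₁ : Exact T₁ t₁) (h₂ : Exact T₂ t₂) :
    Exact (⋃ y ∈ T₁, (fun z => y ⊔ z) '' T₂) (t₁ ⊔ t₂) := by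
  apply Exact.glue (f := fun y => y ⊔ t₂) (I := T₁)
  · have : (fun y => y ⊔ t₂) '' T₁ = (fun y => t₂ ⊔ y) '' T₁ :=
      Set.image_congr' (fun x => sup_comm _ _)
    rw [this, sup_comm t₁ t₂]
    exact h₁.translate t₂
  · intro y _
    exact h₂.translate y

lemma isBot_sup {s t : J} (hs : IsBot s) (ht : IsBot t) : IsBot (s ⊔ t) :=
  fun x => sup_le (hs x) (ht x)

/-! ### The infinitary sequent calculus -/

/-- Sequents `A ⊢ γ`: the meet of (the images of) `A` is below (the image of) `γ`,
in any complete Boolean algebra model preserving joins, bottoms and exact meets. -/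
inductive Seq : Finset J → WithBot J → Prop
  | ax {A : Finset J} {γ : WithBot J} {x : J} (hx : x ∈ A) (hle : (x : WithBot J) ≤ γ) :
      Seq A γ
  | orE {A : Finset J} {γ : WithBot J} {x a b : J} (h0 : Seq A (x : WithBot J))
      (hx : x ≤ a ⊔ b) (ha : Seq (insert a A) γ) (hb : Seq (insert b A) γ) : Seq A γ
  | exE {A : Finset J} {γ : WithBot J} {t : J} {T : Set J} (h0 : Seq A (t : WithBot J))
      (hT : Exact T t) (hne : T.Nonempty) (h : ∀ y ∈ T, Seq (insert y A) γ) : Seq A γ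
  | exI {A : Finset J} {t : J} {T : Set J} (hT : Exact T t)
      (h : ∀ y ∈ T, Seq A (y : WithBot J)) : Seq A (t : WithBot J)
  | botE {A : Finset J} {b : J} (hb : IsBot b) (h : Seq A (b : WithBot J)) : Seq A ⊥

/-- Antecedent strengthening / substitution. -/
theorem Seq.sub {B : Finset J} {γ : WithBot J} (h : Seq B γ) :
    ∀ A : Finset J, (∀ x ∈ B, ∃ y ∈ A, y ≤ x) → Seq A γ := by
  induction h with
  | ax hx hle =>
    intro A hA
    obtain ⟨y, hy, hyx⟩ := hA _ hx
    exact Seq.ax hy (le_trans (WithBot.coe_le_coe.2 hyx) hle)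
  | orE h0 hx ha hb ih0 iha ihb =>
    intro A hA
    refine Seq.orE (ih0 A hA) hx (iha _ ?_) (ihb _ ?_)
    all_goals
      intro x hxmem
      rcases Finset.mem_insert.1 hxmem with rfl | hxB
      · exact ⟨x, Finset.mem_insert_self _ _, le_rfl⟩
      · obtain ⟨y, hy, hyx⟩ := hA _ hxB
        exact ⟨y, Finset.mem_insert_of_mem hy, hyx⟩
  | exE h0 hT hne h ih0 ih =>
    intro A hA
    refine Seq.exE (ih0 A hA) hT hne (fun y hy => ih y hy _ ?_)
    intro x hxmem
    rcases Finset.mem_insert.1 hxmem with rfl | hxB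
    · exact ⟨x, Finset.mem_insert_self _ _, le_rfl⟩
    · obtain ⟨z, hz, hzx⟩ := hA _ hxB
      exact ⟨z, Finset.mem_insert_of_mem hz, hzx⟩
  | exI hT h ih =>
    intro A hA
    exact Seq.exI hT (fun y hy => ih y hy A hA)
  | botE hb h ih =>
    intro A hA
    exact Seq.botE hb (ih A hA)

theorem Seq.weaken {B A : Finset J} {γ : WithBot J} (h : Seq B γ) (hBA : B ⊆ A) : Seq A γ :=
  h.sub A (fun x hx => ⟨x, hBA hx, le_rfl⟩)

/-- Monotonicity in the succedent. -/
theorem Seq.mon {A : Finset J} {γ : WithBot J} (h : Seq A γ) :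
    ∀ δ : WithBot J, γ ≤ δ → Seq A δ := by
  induction h with
  | ax hx hle => exact fun δ hδ => Seq.ax hx (hle.trans hδ)
  | orE h0 hx ha hb ih0 iha ihb =>
    exact fun δ hδ => Seq.orE h0 hx (iha δ hδ) (ihb δ hδ)
  | exE h0 hT hne h ih0 ih =>
    exact fun δ hδ => Seq.exE h0 hT hne (fun y hy => ih y hy δ hδ)
  | @exI A t T hT h ih =>
    intro δ hδ
    cases δ with
    | bot => exact absurd hδ (WithBot.not_coe_le_bot t)
    | coe d =>
      have htd : t ≤ d := WithBot.coe_le_coe.1 hδ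
      have : Seq A ((d ⊔ t : J) : WithBot J) := by
        refine Seq.exI (hT.translate d) ?_
        rintro z ⟨y, hy, rfl⟩
        exact ih y hy _ (WithBot.coe_le_coe.2 le_sup_right)
      rwa [sup_eq_left.2 htd] at this
  | botE hb h ih =>
    intro δ hδ
    cases δ with
    | bot => exact Seq.botE hb h
    | coe d => exact ih _ (WithBot.coe_le_coe.2 (hb d))

/-- Cut admissibility. -/
theorem Seq.cut {B : Finset J} {γ : WithBot J} {c : J} (h : Seq B γ) :
    ∀ A : Finset J, B ⊆ insert c A → Seq A (c : WithBot J) → Seq A γ := by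
  induction h with
  | ax hx hle =>
    intro A hBA hc
    rcases Finset.mem_insert.1 (hBA hx) with rfl | hxA
    · exact hc.mon _ hle
    · exact Seq.ax hxA hle
  | orE h0 hx ha hb ih0 iha ihb =>
    intro A hBA hc
    refine Seq.orE (ih0 A hBA hc) hx
      (iha (insert _ A) ?_ (hc.weaken (Finset.subset_insert _ _)))
      (ihb (insert _ A) ?_ (hc.weaken (Finset.subset_insert _ _)))
    all_goals
      intro x hxmem
      rcases Finset.mem_insert.1 hxmem with rfl | hxB
      · exact Finset.mem_insert_of_mem (Finset.mem_insert_self _ _)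
      · rcases Finset.mem_insert.1 (hBA hxB) with rfl | hxA
        · exact Finset.mem_insert_self _ _
        · exact Finset.mem_insert_of_mem (Finset.mem_insert_of_mem hxA)
  | exE h0 hT hne h ih0 ih =>
    intro A hBA hc
    refine Seq.exE (ih0 A hBA hc) hT hne
      (fun y hy => ih y hy (insert y A) ?_ (hc.weaken (Finset.subset_insert _ _)))
    intro x hxmem
    rcases Finset.mem_insert.1 hxmem with rfl | hxB
    · exact Finset.mem_insert_of_mem (Finset.mem_insert_self _ _)
    · rcases Finset.mem_insert.1 (hBA hxB) with rfl | hxA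
      · exact Finset.mem_insert_self _ _
      · exact Finset.mem_insert_of_mem (Finset.mem_insert_of_mem hxA)
  | exI hT h ih =>
    intro A hBA hc
    exact Seq.exI hT (fun y hy => ih y hy A hBA hc)
  | botE hb h ih =>
    intro A hBA hc
    exact Seq.botE hb (ih A hBA hc)

/-- Resolution: the key "Boolean" consequence of cut. -/
theorem Seq.res {A : Finset J} {γ : WithBot J} {c : J}
    (h1 : Seq (insert c A) γ) (h2 : Seq A (γ ⊔ (c : WithBot J))) : Seq A γ := by
  cases γ with
  | bot =>
    rw [bot_sup_eq] at h2
    exact h1.cut A le_rfl h2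
  | coe g =>
    have h2' : Seq A ((g ⊔ c : J) : WithBot J) := by rwa [WithBot.coe_sup]
    exact Seq.orE h2' le_rfl (Seq.ax (Finset.mem_insert_self _ _) le_rfl) h1

/-! ### Certificates: semantic soundness of the calculus -/

/-- Every member of `T` is above some member of `A`. -/
def Wits (T : Set J) (A : Finset J) : Prop := ∀ y ∈ T, ∃ x ∈ A, x ≤ y

/-- A certificate that the meet of `A` is below `γ`. -/
def Cert (A : Finset J) (γ : WithBot J) : Prop :=
  ∃ T t, Exact T t ∧ Wits T A ∧ ((t : WithBot J) ≤ γ ∨ IsBot t)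

lemma Exact.repair {R : Set J} {r : J} (hR : Exact R r) {T₀ : Set J} {t₀ : J}
    (h₀ : Exact T₀ t₀) {A : Finset J} (w₀ : Wits T₀ A)
    (hz : ∀ z ∈ R, (∃ x ∈ A, x ≤ z) ∨ t₀ ≤ z) :
    ∃ R', Exact R' r ∧ Wits R' A := by
  classical
  refine ⟨⋃ z ∈ R, if ∃ x ∈ A, x ≤ z then {z} else (fun w => z ⊔ w) '' T₀, ?_, ?_⟩
  · apply Exact.glue (f := id) (I := R) (by simpa using hR)
    intro z hz'
    by_cases h : ∃ x ∈ A, x ≤ z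
    · simpa [h] using exact_singleton z
    · rw [if_neg h]
      have ht₀z : t₀ ≤ z := (hz z hz').resolve_left h
      have htr := h₀.translate z
      rwa [sup_eq_left.2 ht₀z] at htr
  · intro y hy
    simp only [Set.mem_iUnion] at hy
    obtain ⟨z, hzR, hy⟩ := hy
    by_cases h : ∃ x ∈ A, x ≤ z
    · rw [if_pos h] at hy
      obtain ⟨x, hx, hxz⟩ := h
      rw [Set.mem_singleton_iff] at hy
      exact ⟨x, hx, hy ▸ hxz⟩
    · rw [if_neg h] at hy
      obtain ⟨w, hw, rfl⟩ := hy
      obtain ⟨x, hx, hxw⟩ := w₀ w hw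
      exact ⟨x, hx, hxw.trans le_sup_right⟩

lemma bound_sup {γ : WithBot J} {t₁ t₂ : J}
    (d₁ : (t₁ : WithBot J) ≤ γ ∨ IsBot t₁) (d₂ : (t₂ : WithBot J) ≤ γ ∨ IsBot t₂) :
    ((t₁ ⊔ t₂ : J) : WithBot J) ≤ γ ∨ IsBot (t₁ ⊔ t₂) := by
  cases γ with
  | bot =>
    have h₁ : IsBot t₁ := d₁.resolve_left (WithBot.not_coe_le_bot t₁)
    have h₂ : IsBot t₂ := d₂.resolve_left (WithBot.not_coe_le_bot t₂)
    exact Or.inr (isBot_sup h₁ h₂)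
  | coe g =>
    have h₁ : t₁ ≤ g := d₁.elim (fun h => WithBot.coe_le_coe.1 h) (fun h => h g)
    have h₂ : t₂ ≤ g := d₂.elim (fun h => WithBot.coe_le_coe.1 h) (fun h => h g)
    exact Or.inl (WithBot.coe_le_coe.2 (sup_le h₁ h₂))

/-- Soundness: every derivable sequent has a certificate. -/
theorem Seq.cert {A : Finset J} {γ : WithBot J} (h : Seq A γ) : Cert A γ := by
  induction h with
  | @ax A γ x hx hle =>
    refine ⟨{x}, x, exact_singleton x, ?_, Or.inl hle⟩
    intro y hy
    rw [Set.mem_singleton_iff] at hy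
    exact ⟨x, hx, hy ▸ le_rfl⟩
  | @orE A γ x a b h0 hx ha hb ih0 iha ihb =>
    obtain ⟨T₀, t₀, h₀, w₀, d₀⟩ := ih0
    have ht₀x : t₀ ≤ x := d₀.elim (fun h => WithBot.coe_le_coe.1 h) (fun h => h x)
    obtain ⟨T₁, t₁, h₁, w₁, d₁⟩ := iha
    obtain ⟨T₂, t₂, h₂, w₂, d₂⟩ := ihb
    have hz : ∀ z ∈ ⋃ y ∈ T₁, (fun w => y ⊔ w) '' T₂, (∃ x' ∈ A, x' ≤ z) ∨ t₀ ≤ z := by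
      intro z hz
      simp only [Set.mem_iUnion] at hz
      obtain ⟨y₁, hy₁, y₂, hy₂, rfl⟩ := hz
      obtain ⟨x₁, hx₁, hx₁le⟩ := w₁ y₁ hy₁
      obtain ⟨x₂, hx₂, hx₂le⟩ := w₂ y₂ hy₂
      rcases Finset.mem_insert.1 hx₁ with rfl | hx₁A
      · rcases Finset.mem_insert.1 hx₂ with rfl | hx₂A
        · exact Or.inr (ht₀x.trans (hx.trans (sup_le_sup hx₁le hx₂le)))
        · exact Or.inl ⟨x₂, hx₂A, hx₂le.trans le_sup_right⟩
      · exact Or.inl ⟨x₁, hx₁A, hx₁le.trans le_sup_left⟩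
    obtain ⟨R', hR', w'⟩ := (h₁.sup2 h₂).repair h₀ w₀ hz
    exact ⟨R', t₁ ⊔ t₂, hR', w', bound_sup d₁ d₂⟩
  | @exE A γ t T h0 hT hne h ih0 ih =>
    obtain ⟨T₀, t₀, h₀, w₀, d₀⟩ := ih0
    have ht₀t : t₀ ≤ t := d₀.elim (fun h => WithBot.coe_le_coe.1 h) (fun h => h t)
    obtain ⟨y₀, hy₀⟩ := hne
    obtain ⟨R, r, hR, wR, dR⟩ := ih y₀ hy₀
    have hz : ∀ z ∈ R, (∃ x' ∈ A, x' ≤ z) ∨ t₀ ≤ z := by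
      intro z hzR
      obtain ⟨x', hx', hx'le⟩ := wR z hzR
      rcases Finset.mem_insert.1 hx' with rfl | hx'A
      · exact Or.inr (ht₀t.trans ((hT.1.1 hy₀).trans hx'le))
      · exact Or.inl ⟨x', hx'A, hx'le⟩
    obtain ⟨R', hR', w'⟩ := hR.repair h₀ w₀ hz
    exact ⟨R', r, hR', w', dR⟩
  | @exI A t T hT h ih =>
    classical
    choose Rf rf hE hW hd using ih
    set r' : J → J := fun y => if h : y ∈ T then rf y h else y with hr'def
    set R' : J → Set J := fun y => if h : y ∈ T then Rf y h else {y} with hR'def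
    have hr'le : ∀ y ∈ T, r' y ≤ y := by
      intro y hy
      simp only [hr'def, dif_pos hy]
      exact (hd y hy).elim (fun h => WithBot.coe_le_coe.1 h) (fun h => h y)
    have hE' : ∀ y ∈ T, Exact (R' y) (r' y) := by
      intro y hy
      simp only [hr'def, hR'def, dif_pos hy]
      exact hE y hy
    have hW' : ∀ y ∈ T, Wits (R' y) A := by
      intro y hy
      simp only [hR'def, dif_pos hy]
      exact hW y hy
    have base : Exact ((fun y => t ⊔ r' y) '' T) t := by
      constructor
      · constructor
        · rintro w ⟨y, hy, rfl⟩
          exact le_sup_left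
        · intro ℓ hℓ
          apply hT.1.2
          intro y hy
          exact (hℓ ⟨y, hy, rfl⟩).trans (sup_le (hT.1.1 hy) (hr'le y hy))
      · intro a
        constructor
        · rintro w ⟨w', ⟨y, hy, rfl⟩, rfl⟩
          exact sup_le_sup_left le_sup_left a
        · intro ℓ hℓ
          apply (hT.2 a).2
          rintro w ⟨y, hy, rfl⟩
          exact (hℓ ⟨_, ⟨y, hy, rfl⟩, rfl⟩).trans
            (sup_le_sup_left (sup_le (hT.1.1 hy) (hr'le y hy)) a)
    have final := base.glue (R := fun y => (fun w => (t ⊔ r' y) ⊔ w) '' (R' y)) ?_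
    · refine ⟨_, t, final, ?_, Or.inl le_rfl⟩
      intro w hw
      simp only [Set.mem_iUnion] at hw
      obtain ⟨y, hy, w', hw', rfl⟩ := hw
      obtain ⟨x, hx, hxw'⟩ := hW' y hy w' hw'
      exact ⟨x, hx, hxw'.trans le_sup_right⟩
    · intro y hy
      have htr := (hE' y hy).translate (t ⊔ r' y)
      rwa [sup_assoc, sup_idem] at htr
  | @botE A b hb h ih =>
    obtain ⟨T, t, hT, w, d⟩ := ih
    have hbt : IsBot t := by
      rcases d with d | d
      · exact fun z => (WithBot.coe_le_coe.1 d).trans (hb z)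
      · exact d
    exact ⟨T, t, hT, w, Or.inr hbt⟩

/-- Order reflection. -/
theorem Seq.reflect {a b : J} (h : Seq {a} (b : WithBot J)) : a ≤ b := by
  obtain ⟨T, t, hT, w, hd⟩ := h.cert
  have hat : a ≤ t := by
    apply hT.1.2
    intro y hy
    obtain ⟨x, hx, hxy⟩ := w y hy
    rw [Finset.mem_singleton] at hx
    exact hx ▸ hxy
  have htb : t ≤ b := hd.elim (fun h => WithBot.coe_le_coe.1 h) (fun h => h b)
  exact hat.trans htb

/-! ### The frame of closed ideals -/

variable (J) in
/-- Points: formal finite meets of generators (first component) and complemented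
generators (second component). -/
abbrev Pt := Finset J × Finset J

/-- Join of the negative part, as a `WithBot` element. -/
def gam (C : Finset J) : WithBot J := C.sup (fun c => (c : WithBot J))

lemma gam_insert {c : J} {C : Finset J} : gam (insert c C) = (c : WithBot J) ⊔ gam C :=
  Finset.sup_insert

lemma gam_subset_le {C C' : Finset J} (h : C ⊆ C') : gam C ≤ gam C' :=
  Finset.sup_mono h

lemma gam_le_of_forall {C C' : Finset J} (h : ∀ c ∈ C', ∃ d ∈ C, c ≤ d) :
    gam C' ≤ gam C := by
  apply Finset.sup_le
  intro c hc
  obtain ⟨d, hd, hcd⟩ := h c hc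
  exact (WithBot.coe_le_coe.2 hcd).trans (Finset.le_sup hd)

/-- Inconsistent points. -/
def incons (F : Pt J) : Prop := Seq F.1 (gam F.2)

/-- `F` is a stronger formal conjunction than `G`. -/
def preceq (F G : Pt J) : Prop :=
  (∀ a ∈ G.1, ∃ x ∈ F.1, x ≤ a) ∧ (∀ c ∈ G.2, ∃ d ∈ F.2, c ≤ d)

lemma preceq_refl (F : Pt J) : preceq F F :=
  ⟨fun a ha => ⟨a, ha, le_rfl⟩, fun c hc => ⟨c, hc, le_rfl⟩⟩

/-- Conjunction of two points. -/
def pjoin (F G : Pt J) : Pt J := (F.1 ∪ G.1, F.2 ∪ G.2)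

lemma pjoin_preceq_left (F G : Pt J) : preceq (pjoin F G) F :=
  ⟨fun a ha => ⟨a, Finset.mem_union_left _ ha, le_rfl⟩,
   fun c hc => ⟨c, Finset.mem_union_left _ hc, le_rfl⟩⟩

lemma pjoin_preceq_right (F G : Pt J) : preceq (pjoin F G) G :=
  ⟨fun a ha => ⟨a, Finset.mem_union_right _ ha, le_rfl⟩,
   fun c hc => ⟨c, Finset.mem_union_right _ hc, le_rfl⟩⟩

lemma pjoin_self (F : Pt J) : pjoin F F = F := by
  simp [pjoin]

lemma preceq_pjoin_mono {G G' : Pt J} (F : Pt J) (h : preceq G G') :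
    preceq (pjoin F G) (pjoin F G') := by
  constructor
  · intro a ha
    rcases Finset.mem_union.1 ha with ha | ha
    · exact ⟨a, Finset.mem_union_left _ ha, le_rfl⟩
    · obtain ⟨x, hx, hxa⟩ := h.1 a ha
      exact ⟨x, Finset.mem_union_right _ hx, hxa⟩
  · intro c hc
    rcases Finset.mem_union.1 hc with hc | hc
    · exact ⟨c, Finset.mem_union_left _ hc, le_rfl⟩
    · obtain ⟨d, hd, hcd⟩ := h.2 c hc
      exact ⟨d, Finset.mem_union_right _ hd, hcd⟩

/-- Closure conditions on a set of points, defining the elements of the frame. -/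
structure Closed (U : Set (Pt J)) : Prop where
  down : ∀ {F G : Pt J}, preceq F G → G ∈ U → F ∈ U
  inc : ∀ {F : Pt J}, incons F → F ∈ U
  split : ∀ (A C : Finset J) (c : J), ((insert c A, C) : Pt J) ∈ U →
    ((A, insert c C) : Pt J) ∈ U → ((A, C) : Pt J) ∈ U

lemma Closed.pad {W : Set (Pt J)} (hW : Closed W) (F : Pt J) :
    Closed {G | pjoin F G ∈ W} := by
  constructor
  · intro G G' h hG'
    exact hW.down (preceq_pjoin_mono F h) hG'
  · intro G hG
    refine hW.inc ?_
    exact (hG.weaken Finset.subset_union_right).mon _ (gam_subset_le Finset.subset_union_right)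
  · intro A C c h1 h2
    have h1' : ((insert c (F.1 ∪ A), F.2 ∪ C) : Pt J) ∈ W := by
      rwa [show insert c (F.1 ∪ A) = F.1 ∪ insert c A from (Finset.union_insert _ _ _).symm]
    have h2' : ((F.1 ∪ A, insert c (F.2 ∪ C)) : Pt J) ∈ W := by
      rwa [show insert c (F.2 ∪ C) = F.2 ∪ insert c C from (Finset.union_insert _ _ _).symm]
    exact hW.split (F.1 ∪ A) (F.2 ∪ C) c h1' h2'

variable (J) in
/-- The frame. -/
def Lat := {U : Set (Pt J) // Closed U}

namespace Lat

instance : InfSet (Lat J) :=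
  ⟨fun S => ⟨{F | ∀ U ∈ S, F ∈ U.1},
    ⟨fun h hG U hU => U.2.down h (hG U hU),
     fun h U hU => U.2.inc h,
     fun A C c h1 h2 U hU => U.2.split A C c (h1 U hU) (h2 U hU)⟩⟩⟩

instance : PartialOrder (Lat J) := Subtype.partialOrder _

lemma le_iff {U V : Lat J} : U ≤ V ↔ U.1 ⊆ V.1 := Iff.rfl

instance : CompleteLattice (Lat J) :=
  completeLatticeOfInf _ (fun S =>
    ⟨fun U hU => fun F hF => hF U hU,
     fun V hV => fun F hF U hU => hV hU hF⟩)

lemma mem_inf {U V : Lat J} {F : Pt J} : F ∈ (U ⊓ V).1 ↔ F ∈ U.1 ∧ F ∈ V.1 := by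
  constructor
  · intro h
    exact ⟨h U (by simp), h V (by simp)⟩
  · rintro ⟨h1, h2⟩ W hW
    rcases hW with rfl | hW
    · exact h1
    · rw [Set.mem_singleton_iff] at hW
      exact hW ▸ h2

lemma mem_sInf {S : Set (Lat J)} {F : Pt J} : F ∈ (sInf S).1 ↔ ∀ U ∈ S, F ∈ U.1 := Iff.rfl

lemma frame_law (a : Lat J) (s : Set (Lat J)) : a ⊓ sSup s ≤ ⨆ b ∈ s, a ⊓ b := by
  intro F hF
  obtain ⟨hFa, hFs⟩ := mem_inf.1 hF
  set W : Lat J := ⨆ b ∈ s, a ⊓ b with hWdef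
  set T : Lat J := ⟨{G | pjoin F G ∈ W.1}, W.2.pad F⟩ with hTdef
  have hub : ∀ V ∈ s, V ≤ T := by
    intro V hV G hG
    have h1 : pjoin F G ∈ (a ⊓ V).1 :=
      mem_inf.2 ⟨a.2.down (pjoin_preceq_left F G) hFa, V.2.down (pjoin_preceq_right F G) hG⟩
    have h2 : a ⊓ V ≤ W := le_iSup₂ (f := fun b _ => a ⊓ b) V hV
    exact h2 h1
  have hT : F ∈ T.1 := (sSup_le hub) hFs
  have : pjoin F F ∈ W.1 := hT
  rwa [pjoin_self] at this

instance : Order.Frame (Lat J) :=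
  Order.Frame.ofMinimalAxioms
    { (inferInstance : CompleteLattice (Lat J)) with
      inf_sSup_le_iSup_inf := frame_law }

end Lat

/-! ### The generators -/

/-- The image of a generator in the frame. -/
def eL (c : J) : Lat J :=
  ⟨{F | Seq F.1 ((c : WithBot J) ⊔ gam F.2)}, by
    constructor
    · intro F G h hG
      exact (hG.sub F.1 h.1).mon _ (sup_le_sup_left (gam_le_of_forall h.2) _)
    · intro F hF
      exact hF.mon _ le_sup_right
    · intro A C c' h1 h2
      have h1' : Seq (insert c' A) ((c : WithBot J) ⊔ gam C) := h1
      have h2' : Seq A ((c : WithBot J) ⊔ gam (insert c' C)) := h2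
      rw [gam_insert] at h2'
      show Seq A ((c : WithBot J) ⊔ gam C)
      refine Seq.res (c := c') h1' (h2'.mon _ ?_)
      rw [sup_comm (c' : WithBot J) (gam C), ← sup_assoc]⟩

/-- The complement of a generator in the frame. -/
def hL (c : J) : Lat J :=
  ⟨{F | Seq (insert c F.1) (gam F.2)}, by
    constructor
    · intro F G h hG
      refine (hG.sub (insert c F.1) ?_).mon _ (gam_le_of_forall h.2)
      intro x hx
      rcases Finset.mem_insert.1 hx with rfl | hxG
      · exact ⟨x, Finset.mem_insert_self _ _, le_rfl⟩
      · obtain ⟨y, hy, hyx⟩ := h.1 x hxG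
        exact ⟨y, Finset.mem_insert_of_mem hy, hyx⟩
    · intro F hF
      exact (hF.weaken (Finset.subset_insert _ _))
    · intro A C c' h1 h2
      have h1' : Seq (insert c' (insert c A)) (gam C) := by
        have : Seq (insert c (insert c' A)) (gam C) := h1
        rwa [Finset.insert_comm] at this
      have h2' : Seq (insert c A) (gam (insert c' C)) := h2
      rw [gam_insert] at h2'
      show Seq (insert c A) (gam C)
      exact Seq.res (c := c') h1' (h2'.mon _ (by rw [sup_comm]))⟩

lemma mem_eL {c : J} {F : Pt J} : F ∈ (eL c).1 ↔ Seq F.1 ((c : WithBot J) ⊔ gam F.2) :=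
  Iff.rfl

lemma eL_mono {a b : J} (h : a ≤ b) : eL a ≤ eL b := by
  intro F hF
  exact hF.mon _ (sup_le_sup_right (WithBot.coe_le_coe.2 h) _)

lemma eL_reflect {a b : J} (h : eL a ≤ eL b) : a ≤ b := by
  have ha : (({a}, ∅) : Pt J) ∈ (eL a).1 := by
    rw [mem_eL]
    exact Seq.ax (Finset.mem_singleton_self a) le_sup_left
  have hb := h ha
  rw [mem_eL] at hb
  have : Seq ({a} : Finset J) (b : WithBot J) := by
    have hg : gam (∅ : Finset J) = ⊥ := Finset.sup_empty
    rwa [hg, sup_bot_eq] at hb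
  exact this.reflect

lemma eL_sup (a b : J) : eL (a ⊔ b) = eL a ⊔ eL b := by
  apply le_antisymm
  · intro F hF
    rw [mem_eL] at hF
    set V : Lat J := eL a ⊔ eL b with hV
    obtain ⟨A, C⟩ := F
    refine V.2.split A C a ?_ (V.2.split A (insert a C) b ?_ ?_)
    · refine le_sup_left (a := eL a) (b := eL b) ?_
      rw [mem_eL]
      exact Seq.ax (Finset.mem_insert_self _ _) le_sup_left
    · refine le_sup_right (a := eL a) (b := eL b) ?_
      rw [mem_eL]
      exact Seq.ax (Finset.mem_insert_self _ _) le_sup_left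
    · refine V.2.inc ?_
      have : Seq A ((a ⊔ b : J) ⊔ gam C : WithBot J) := hF
      show Seq A (gam (insert b (insert a C)))
      rw [gam_insert, gam_insert]
      refine this.mon _ ?_
      rw [WithBot.coe_sup]
      rw [show ((b : WithBot J) ⊔ ((a : WithBot J) ⊔ gam C)) =
        ((a : WithBot J) ⊔ (b : WithBot J)) ⊔ gam C by
          rw [← sup_assoc, sup_comm (b : WithBot J) (a : WithBot J)]]
  · refine sup_le (eL_mono le_sup_left) (eL_mono le_sup_right)

lemma eL_bot {m : J} (hm : IsBot m) : eL m = ⊥ := by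
  apply le_antisymm
  · intro F hF
    rw [mem_eL] at hF
    have hinc : incons F := by
      show Seq F.1 (gam F.2)
      cases hgc : gam F.2 with
      | bot =>
        rw [hgc, sup_bot_eq] at hF
        exact Seq.botE hm hF
      | coe d =>
        rw [hgc] at hF
        have heq : ((m : WithBot J) ⊔ (d : WithBot J)) = (d : WithBot J) := by
          rw [← WithBot.coe_sup, sup_eq_right.2 (hm d)]
        rw [heq] at hF
        exact hF
    exact (⊥ : Lat J).2.inc hinc
  · exact bot_le

lemma eL_sInf {S : Set J} {m : J} (hS : Exact S m) : eL m = sInf (eL '' S) := by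
  apply le_antisymm
  · apply le_sInf
    rintro V ⟨s, hs, rfl⟩
    exact eL_mono (hS.1.1 hs)
  · intro F hF
    rw [Lat.mem_sInf] at hF
    have hall : ∀ s ∈ S, Seq F.1 ((s : WithBot J) ⊔ gam F.2) := by
      intro s hs
      exact hF (eL s) ⟨s, hs, rfl⟩
    rw [mem_eL]
    cases hgc : gam F.2 with
    | bot =>
      have : Seq F.1 (m : WithBot J) := by
        refine Seq.exI hS ?_
        intro y hy
        have := hall y hy
        rwa [hgc, sup_bot_eq] at this
      rw [sup_bot_eq]
      exact this
    | coe g =>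
      have : Seq F.1 ((g ⊔ m : J) : WithBot J) := by
        refine Seq.exI (hS.translate g) ?_
        rintro z ⟨y, hy, rfl⟩
        have := hall y hy
        rw [hgc, ← WithBot.coe_sup] at this
        rwa [sup_comm y g] at this
      rw [← WithBot.coe_sup, sup_comm m g]
      exact this

lemma eL_inf_hL (c : J) : eL c ⊓ hL c = ⊥ := by
  apply le_antisymm
  · intro F hF
    obtain ⟨h1, h2⟩ := Lat.mem_inf.1 hF
    rw [mem_eL] at h1
    have h2' : Seq (insert c F.1) (gam F.2) := h2
    have hinc : incons F := Seq.res h2' (h1.mon _ (by rw [sup_comm]))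
    exact (⊥ : Lat J).2.inc hinc
  · exact bot_le

lemma eL_sup_hL (c : J) : eL c ⊔ hL c = ⊤ := by
  apply le_antisymm
  · exact le_top
  · intro F _
    set V : Lat J := eL c ⊔ hL c with hV
    obtain ⟨A, C⟩ := F
    refine V.2.split A C c ?_ ?_
    · refine le_sup_left (a := eL c) (b := hL c) ?_
      rw [mem_eL]
      exact Seq.ax (Finset.mem_insert_self _ _) le_sup_left
    · refine le_sup_right (a := eL c) (b := hL c) ?_
      show Seq (insert c A) (gam (insert c C))
      rw [gam_insert]
      exact Seq.ax (Finset.mem_insert_self _ _) le_sup_left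

/-! ### The Booleanization of a frame -/

section Booleanization

variable {α : Type u} [Order.Frame α]

lemma isRegular_of_compl' {x y : α} (hinf : x ⊓ y = ⊥) (hsup : x ⊔ y = ⊤) :
    Heyting.IsRegular x := by
  have h1 : xᶜ = y := compl_unique hinf hsup
  have h2 : yᶜ = x := compl_unique (by rwa [inf_comm]) (by rwa [sup_comm])
  show xᶜᶜ = x
  rw [h1, h2]

/-- Constructor for regular elements. -/
def mkReg (a : α) (h : Heyting.IsRegular a) : Heyting.Regular α := Subtype.mk a h

@[simp] lemma mkReg_val (a : α) (h : Heyting.IsRegular a) : (mkReg a h).val = a := rfl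

lemma isRegular_sInf' {S : Set α} (h : ∀ x ∈ S, Heyting.IsRegular x) :
    Heyting.IsRegular (sInf S) := by
  apply le_antisymm
  · apply le_sInf
    intro x hx
    calc (sInf S)ᶜᶜ ≤ xᶜᶜ := compl_anti (compl_anti (sInf_le hx))
    _ = x := h x hx
  · exact le_compl_compl

noncomputable instance : CompleteLattice (Heyting.Regular α) :=
  { (inferInstance : Lattice (Heyting.Regular α)),
    (inferInstance : BoundedOrder (Heyting.Regular α)) with
    sInf := fun S => mkReg (sInf (Subtype.val '' S)) (isRegular_sInf' (by
      rintro y ⟨x, _, rfl⟩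
      exact x.2))
    isGLB_sInf := fun S => ⟨fun a ha => by
      show sInf (Subtype.val '' S) ≤ a.val
      have hm : a.val ∈ Subtype.val '' S := ⟨a, ha, rfl⟩
      exact sInf_le hm,
      fun a h => by
      show a.val ≤ sInf (Subtype.val '' S)
      apply le_sInf
      rintro b ⟨x, hx, rfl⟩
      exact h hx⟩
    sSup := fun S => Heyting.Regular.toRegular (sSup (Subtype.val '' S))
    isLUB_sSup := fun S => ⟨fun a ha => by
      show a.val ≤ (sSup (Subtype.val '' S))ᶜᶜ
      have hm : a.val ∈ Subtype.val '' S := ⟨a, ha, rfl⟩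
      exact (le_sSup hm).trans le_compl_compl,
      fun a h => by
      show (sSup (Subtype.val '' S))ᶜᶜ ≤ a.val
      have h1 : sSup (Subtype.val '' S) ≤ a.val := by
        apply sSup_le
        rintro b ⟨x, hx, rfl⟩
        exact h hx
      calc (sSup (Subtype.val '' S))ᶜᶜ ≤ a.valᶜᶜ := compl_anti (compl_anti h1)
      _ = a.val := a.2⟩ }

lemma reg_law1 (a : Heyting.Regular α) (s : Set (Heyting.Regular α)) :
    a ⊓ sSup s ≤ ⨆ b ∈ s, a ⊓ b := by
  set u := ⨆ b ∈ s, a ⊓ b with hu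
  have h1 : ∀ b ∈ s, b ≤ u ⊔ aᶜ := by
    intro b hb
    have hab : a ⊓ b ≤ u := le_iSup₂ (f := fun b _ => a ⊓ b) b hb
    calc b = b ⊓ (a ⊔ aᶜ) := by erw [sup_compl_eq_top, inf_top_eq]
    _ = (b ⊓ a) ⊔ (b ⊓ aᶜ) := inf_sup_left _ _ _
    _ ≤ u ⊔ aᶜ := sup_le_sup (by erw [inf_comm]; exact hab) inf_le_right
  have h2 : sSup s ≤ u ⊔ aᶜ := sSup_le h1
  calc a ⊓ sSup s ≤ a ⊓ (u ⊔ aᶜ) := inf_le_inf_left _ h2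
  _ = (a ⊓ u) ⊔ (a ⊓ aᶜ) := inf_sup_left _ _ _
  _ ≤ u := by erw [inf_compl_eq_bot, sup_bot_eq]; exact inf_le_right

lemma reg_law2 (a : Heyting.Regular α) (s : Set (Heyting.Regular α)) :
    ⨅ b ∈ s, a ⊔ b ≤ a ⊔ sInf s := by
  set u := ⨅ b ∈ s, a ⊔ b with hu
  have h1 : ∀ b ∈ s, u ⊓ aᶜ ≤ b := by
    intro b hb
    calc u ⊓ aᶜ ≤ (a ⊔ b) ⊓ aᶜ := inf_le_inf_right _ (iInf₂_le b hb)
    _ = (a ⊓ aᶜ) ⊔ (b ⊓ aᶜ) := inf_sup_right _ _ _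
    _ ≤ b := by erw [inf_compl_eq_bot, bot_sup_eq]; exact inf_le_left
  have h2 : u ⊓ aᶜ ≤ sInf s := le_sInf h1
  calc u = u ⊓ (a ⊔ aᶜ) := by erw [sup_compl_eq_top, inf_top_eq]
  _ = (u ⊓ a) ⊔ (u ⊓ aᶜ) := inf_sup_left _ _ _
  _ ≤ a ⊔ sInf s := sup_le_sup inf_le_right h2

noncomputable instance : CompleteBooleanAlgebra (Heyting.Regular α) :=
  { (inferInstance : CompleteLattice (Heyting.Regular α)),
    (inferInstance : BooleanAlgebra (Heyting.Regular α)) with }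

end Booleanization

end Funayama

open Funayama

/-- Funayama for join semilattices: every join semilattice embeds
into a complete Boolean algebra by a map that is order-preserving and
order-reflecting (hence injective), preserves all existing finite joins
(binary joins, and the bottom element whenever it exists), and preserves all
existing exact meets. -/
theorem funayama_join_semilattice (J : Type u) [SemilatticeSup J] :
    ∃ (B : Type u) (inst : CompleteBooleanAlgebra B) (e : J → B),
      (∀ a b : J, a ≤ b ↔ inst.le (e a) (e b)) ∧
      (∀ a b : J, e (a ⊔ b) = inst.sup (e a) (e b)) ∧
      (∀ m : J, IsBot m → e m = inst.bot) ∧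
      (∀ (S : Set J) (m : J), IsGLB S m →
        (∀ a : J, IsGLB ((fun s => a ⊔ s) '' S) (a ⊔ m)) →
        e m = inst.sInf (e '' S)) := by
  classical
  set e : J → Heyting.Regular (Lat J) :=
    fun a => mkReg (eL a) (isRegular_of_compl' (eL_inf_hL a) (eL_sup_hL a)) with he
  refine ⟨Heyting.Regular (Lat J), inferInstance, e, ?_, ?_, ?_, ?_⟩
  · intro a b
    constructor
    · intro h
      show e a ≤ e b
      show eL a ≤ eL b
      exact eL_mono h
    · intro h
      have h' : eL a ≤ eL b := h
      exact eL_reflect h'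
  · intro a b
    show e (a ⊔ b) = e a ⊔ e b
    apply le_antisymm
    · show (e (a ⊔ b)).val ≤ (e a ⊔ e b).val
      have h1 : (e a).val ≤ (e a ⊔ e b).val := (le_sup_left : e a ≤ e a ⊔ e b)
      have h2 : (e b).val ≤ (e a ⊔ e b).val := (le_sup_right : e b ≤ e a ⊔ e b)
      have : (e (a ⊔ b)).val = eL a ⊔ eL b := eL_sup a b
      rw [this]
      exact sup_le h1 h2
    · refine sup_le ?_ ?_
      · show eL a ≤ eL (a ⊔ b)
        exact eL_mono le_sup_left
      · show eL b ≤ eL (a ⊔ b)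
        exact eL_mono le_sup_right
  · intro m hm
    apply Heyting.Regular.coe_injective
    show eL m = ((⊥ : Heyting.Regular (Lat J)) : Lat J)
    rw [Heyting.Regular.coe_bot]
    exact eL_bot hm
  · intro S m h1 h2
    apply Heyting.Regular.coe_injective
    show eL m = sInf (Heyting.Regular.val '' (e '' S))
    rw [Set.image_image]
    exact eL_sInf ⟨h1, h2⟩
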